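/- arXiv:1005.1304 — 3 statements merged into one kernel-verified Lean document; each statement's English description precedes it below -/
import Mathlib

section
/- Let R → T ← S be surjective ring homomorphisms of commutative rings, and let P = R ×_T S = {(x,y) ∈ R × S : ε_R(x) = ε_S(y)} be the fiber product. If R ←α_R− A −α_S→ S are surjective ring homomorphisms, T = R ⊗_A S with ε_R(r) = r⊗1 and ε_S(s) = 1⊗s, then the map a ↦ (α_R(a), α_S(a)) induces a ring isomorphism A/(Ker(α_R) ∩ Ker(α_S)) ≅ R ×_T S. -/
open RingTheory.Sequence Function

noncomputable section

/-- The fiber product `R ×_T S` as a subring of `R × S`. -/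
def fiberProd {R S T : Type*} [CommRing R] [CommRing S] [CommRing T]
    (f : R →+* T) (g : S →+* T) : Subring (R × S) :=
  RingHom.eqLocus (f.comp (RingHom.fst R S)) (g.comp (RingHom.snd R S))

/-- Length of a module: the Krull dimension of its lattice of submodules. -/
noncomputable def lenE (R M : Type*) [CommRing R] [AddCommGroup M] [Module R M] : ℕ∞ :=
  WithBot.unbotD 0 (Order.krullDim (Submodule R M))

/-- Depth of a local ring: supremum of lengths of regular sequences of nonunits. -/
noncomputable def rdepth (Q : Type*) [CommRing Q] : ℕ∞ :=
  sSup {n : ℕ∞ | ∃ rs : List Q, (∀ x ∈ rs, x ∈ nonunits Q) ∧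
    RingTheory.Sequence.IsRegular Q rs ∧ (rs.length : ℕ∞) = n}

/-- A local ring is Cohen-Macaulay if its depth equals its Krull dimension. -/
def IsCMRing (Q : Type*) [CommRing Q] : Prop :=
  (rdepth Q : WithBot ℕ∞) = ringKrullDim Q

/-- Cohen-Macaulay local ring of dimension `d`. -/
def IsCMOfDim (Q : Type*) [CommRing Q] (d : ℕ) : Prop :=
  ringKrullDim Q = ((d : ℕ∞) : WithBot ℕ∞) ∧ rdepth Q = d

/-- The socle of a module over a local ring: largest submodule killed by the maximal ideal
(= set of nonunits). -/
noncomputable def socle (Q M : Type*) [CommRing Q] [AddCommGroup M] [Module Q M] :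
    Submodule Q M :=
  sSup {N : Submodule Q M | ∀ r ∈ nonunits Q, ∀ x ∈ N, r • x = 0}

/-- A local ring is Gorenstein if it is Cohen-Macaulay (there is a maximal regular
sequence of length its Krull dimension) and of type one, i.e. the socle of the artinian
reduction is a simple module. -/
def IsGorensteinRing (Q : Type*) [CommRing Q] : Prop :=
  ∃ rs : List Q, (∀ x ∈ rs, x ∈ nonunits Q) ∧ RingTheory.Sequence.IsRegular Q rs ∧
    ((rs.length : ℕ∞) : WithBot ℕ∞) = ringKrullDim Q ∧
    IsSimpleModule Q (socle Q (Q ⧸ (Ideal.ofList rs)))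

/-- Gorenstein local ring of dimension `d`. -/
def IsGorensteinOfDim (Q : Type*) [CommRing Q] (d : ℕ) : Prop :=
  ringKrullDim Q = ((d : ℕ∞) : WithBot ℕ∞) ∧ ∃ rs : List Q, (∀ x ∈ rs, x ∈ nonunits Q) ∧
    RingTheory.Sequence.IsRegular Q rs ∧ rs.length = d ∧
    IsSimpleModule Q (socle Q (Q ⧸ (Ideal.ofList rs)))

/-- The embedding dimension: minimal number of generators of the maximal ideal
(the ideal of nonunits). -/
noncomputable def edim (Q : Type*) [CommRing Q] : ℕ :=
  sInf {n : ℕ | ∃ s : Finset Q, s.card = n ∧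
    ((Ideal.span (s : Set Q) : Ideal Q) : Set Q) = nonunits Q}

section Aux

variable (A R S : Type) [CommRing A] [CommRing R] [CommRing S]
    [Algebra A R] [Algebra A S]
    (hR : Function.Surjective (algebraMap A R))
    (hS : Function.Surjective (algebraMap A S))

noncomputable def auxF : R →ₐ[A] A ⧸ (RingHom.ker (algebraMap A R) ⊔ RingHom.ker (algebraMap A S)) :=
  { toRingHom := (algebraMap A R).liftOfRightInverse (Function.surjInv hR)
      (Function.rightInverse_surjInv hR)
      ⟨Ideal.Quotient.mk _, fun a ha => Ideal.Quotient.eq_zero_iff_mem.2 (Ideal.mem_sup_left ha)⟩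
    commutes' := fun a => by
      exact RingHom.liftOfRightInverse_comp_apply _ _ _ _ a }

lemma auxF_apply (a : A) : auxF A R S hR (algebraMap A R a) = Ideal.Quotient.mk _ a :=
  RingHom.liftOfRightInverse_comp_apply _ _ _ _ a

noncomputable def auxG : S →ₐ[A] A ⧸ (RingHom.ker (algebraMap A R) ⊔ RingHom.ker (algebraMap A S)) :=
  { toRingHom := (algebraMap A S).liftOfRightInverse (Function.surjInv hS)
      (Function.rightInverse_surjInv hS)
      ⟨Ideal.Quotient.mk _, fun a ha => Ideal.Quotient.eq_zero_iff_mem.2 (Ideal.mem_sup_right ha)⟩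
    commutes' := fun a => by
      exact RingHom.liftOfRightInverse_comp_apply _ _ _ _ a }

lemma auxG_apply (a : A) : auxG A R S hS (algebraMap A S a) = Ideal.Quotient.mk _ a :=
  RingHom.liftOfRightInverse_comp_apply _ _ _ _ a

end Aux

/-- `A/(Ker α_R ∩ Ker α_S) ≅ R ×_T S` for `T = R ⊗_A S`, induced by
`a ↦ (α_R a, α_S a)`. -/
theorem stmt0 (A R S : Type) [CommRing A] [CommRing R] [CommRing S]
    [Algebra A R] [Algebra A S]
    (hR : Function.Surjective (algebraMap A R))
    (hS : Function.Surjective (algebraMap A S)) :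
    ∃ e : (A ⧸ (RingHom.ker (algebraMap A R) ⊓ RingHom.ker (algebraMap A S))) ≃+*
        (fiberProd ((Algebra.TensorProduct.includeLeft :
              R →ₐ[A] TensorProduct A R S) : R →+* TensorProduct A R S)
          ((Algebra.TensorProduct.includeRight :
              S →ₐ[A] TensorProduct A R S) : S →+* TensorProduct A R S)),
      ∀ a : A, ((e (Ideal.Quotient.mk _ a) : R × S)) = (algebraMap A R a, algebraMap A S a) := by
    classical
  -- key: if x ⊗ 1 = 1 ⊗ y then there is a common preimage
  have key : ∀ (x : R) (y : S),
      (Algebra.TensorProduct.includeLeft : R →ₐ[A] TensorProduct A R S) x =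
      (Algebra.TensorProduct.includeRight : S →ₐ[A] TensorProduct A R S) y →
      ∃ a : A, algebraMap A R a = x ∧ algebraMap A S a = y := by
    intro x y h
    obtain ⟨a, ha⟩ := hR x
    obtain ⟨b, hb⟩ := hS y
    have hmu := congrArg (Algebra.TensorProduct.productMap (auxF A R S hR) (auxG A R S hS)) h
    simp only [Algebra.TensorProduct.includeLeft_apply, Algebra.TensorProduct.includeRight_apply,
      Algebra.TensorProduct.productMap_apply_tmul, map_one, mul_one, one_mul] at hmu
    rw [← ha, ← hb, auxF_apply, auxG_apply] at hmu
    have hab : a - b ∈ RingHom.ker (algebraMap A R) ⊔ RingHom.ker (algebraMap A S) := by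
      rwa [← Ideal.Quotient.eq_zero_iff_mem, map_sub, sub_eq_zero]
    obtain ⟨i, hi, j, hj, hij⟩ := Submodule.mem_sup.1 hab
    refine ⟨a - i, ?_, ?_⟩
    · rw [map_sub, ha, RingHom.mem_ker.mp hi, sub_zero]
    · have hc : a - i = b + j := by linear_combination -hij
      rw [hc, map_add, hb, RingHom.mem_ker.mp hj, add_zero]
  set P := fiberProd ((Algebra.TensorProduct.includeLeft :
        R →ₐ[A] TensorProduct A R S) : R →+* TensorProduct A R S)
      ((Algebra.TensorProduct.includeRight :
        S →ₐ[A] TensorProduct A R S) : S →+* TensorProduct A R S) with hP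
  have hmem : ∀ a : A, ((algebraMap A R a, algebraMap A S a) : R × S) ∈ P := by
    intro a
    show (Algebra.TensorProduct.includeLeft : R →ₐ[A] TensorProduct A R S)
        (algebraMap A R a) =
      (Algebra.TensorProduct.includeRight : S →ₐ[A] TensorProduct A R S) (algebraMap A S a)
    rw [AlgHom.commutes, AlgHom.commutes]
  let φ : A →+* P :=
    RingHom.codRestrict ((algebraMap A R).prod (algebraMap A S)) P.toSubsemiring hmem
  have hφ : ∀ a : A, (φ a : R × S) = (algebraMap A R a, algebraMap A S a) := fun a => rfl
  have hsurj : Function.Surjective φ := by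
    rintro ⟨⟨x, y⟩, hxy⟩
    obtain ⟨a, ha1, ha2⟩ := key x y hxy
    exact ⟨a, Subtype.ext (Prod.ext ha1 ha2)⟩
  have hker : RingHom.ker φ =
      RingHom.ker (algebraMap A R) ⊓ RingHom.ker (algebraMap A S) := by
    ext a
    simp only [RingHom.mem_ker, Ideal.mem_inf]
    constructor
    · intro h
      have := congrArg (fun p : P => (p : R × S)) h
      simp only [hφ] at this
      exact ⟨(Prod.ext_iff.1 this).1, (Prod.ext_iff.1 this).2⟩
    · rintro ⟨h1, h2⟩
      exact Subtype.ext (Prod.ext h1 h2)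
  refine ⟨(Ideal.quotEquivOfEq hker.symm).trans (RingHom.quotientKerEquivOfSurjective hsurj),
    fun a => ?_⟩
  have h1 : (Ideal.quotEquivOfEq hker.symm) (Ideal.Quotient.mk _ a) = Ideal.Quotient.mk _ a :=
    Ideal.quotEquivOfEq_mk _ _
  rw [RingEquiv.trans_apply, h1]
  show ((RingHom.kerLift φ) (Ideal.Quotient.mk _ a) : R × S) = _
  rw [RingHom.kerLift_mk]

  exact hφ a
end
end

section
/- With surjective local homomorphisms ε_R : R → T and ε_S : S → T of artinian local rings, the lengths satisfy length(R ×_T S) + length(T) = length(R) + length(S). -/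
open RingTheory.Sequence Function

noncomputable section

section OrderLemmas

variable {α β : Type*} [Preorder α] [Preorder β]

lemma my_height_add_one_le {x y : α} (h : x < y) :
    Order.height x + 1 ≤ Order.height y := by
  rw [Order.height_eq_iSup_lt_height y]
  exact le_iSup₂_of_le x h le_rfl

lemma my_prod_chain_le : ∀ (n : ℕ) (p : LTSeries (α × β)), p.length = n →
    (n : ℕ∞) ≤ Order.height p.last.1 + Order.height p.last.2 := by
  intro n
  induction n with
  | zero => intro p _; simp
  | succ n ih =>
    intro p hp
    have hlen : p.eraseLast.length = n := by simp [hp]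
    have h1 := ih p.eraseLast hlen
    have hlt : p.eraseLast.last < p.last :=
      p.eraseLast_last_rel_last (by omega)
    push_cast
    rcases Prod.lt_iff.mp hlt with ⟨h2, h3⟩ | ⟨h2, h3⟩
    · calc (n : ℕ∞) + 1 ≤ (Order.height p.eraseLast.last.1 + Order.height p.eraseLast.last.2) + 1 :=
            add_le_add_left h1 1
        _ = (Order.height p.eraseLast.last.1 + 1) + Order.height p.eraseLast.last.2 := by
            ring
        _ ≤ Order.height p.last.1 + Order.height p.last.2 :=
            add_le_add (my_height_add_one_le h2) (Order.height_mono h3)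
    · calc (n : ℕ∞) + 1 ≤ (Order.height p.eraseLast.last.1 + Order.height p.eraseLast.last.2) + 1 :=
            add_le_add_left h1 1
        _ = Order.height p.eraseLast.last.1 + (Order.height p.eraseLast.last.2 + 1) := by
            ring
        _ ≤ Order.height p.last.1 + Order.height p.last.2 :=
            add_le_add (Order.height_mono h2) (my_height_add_one_le h3)

lemma my_krullDim_prod_le :
    Order.krullDim (α × β) ≤ Order.krullDim α + Order.krullDim β := by
  refine iSup_le fun p => ?_
  calc (p.length : WithBot ℕ∞)
      ≤ ((Order.height p.last.1 + Order.height p.last.2 : ℕ∞) : WithBot ℕ∞) := by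
        exact_mod_cast my_prod_chain_le p.length p rfl
    _ = (Order.height p.last.1 : WithBot ℕ∞) + (Order.height p.last.2 : WithBot ℕ∞) := by
        push_cast; rfl
    _ ≤ Order.krullDim α + Order.krullDim β :=
        add_le_add (Order.height_le_krullDim _) (Order.height_le_krullDim _)

end OrderLemmas

section Modular

variable {α : Type*} [Lattice α] [IsModularLattice α]

lemma my_krullDim_Iic_Ici (a : α) :
    Order.krullDim α = Order.krullDim {x : α // x ≤ a} + Order.krullDim {x : α // a ≤ x} := by
  apply le_antisymm
  · have hf : StrictMono (fun x : α => ((⟨x ⊓ a, inf_le_right⟩, ⟨x ⊔ a, le_sup_right⟩) :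
        {x : α // x ≤ a} × {x : α // a ≤ x})) := by
      intro x y hxy
      have h1 : x ⊓ a ≤ y ⊓ a := inf_le_inf_right a hxy.le
      have h2 : x ⊔ a ≤ y ⊔ a := sup_le_sup_right hxy.le a
      refine lt_of_le_of_ne ⟨h1, h2⟩ ?_
      intro he
      have he1 : y ⊓ a ≤ x ⊓ a := le_of_eq (congrArg (fun z => (z.1 : α)) he).symm
      have he2 : y ⊔ a ≤ x ⊔ a := le_of_eq (congrArg (fun z => (z.2 : α)) he).symm
      exact hxy.ne (eq_of_le_of_inf_le_of_sup_le hxy.le he1 he2)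
    exact le_trans (Order.krullDim_le_of_strictMono _ hf) my_krullDim_prod_le
  · have h1 : Order.krullDim {x : α // x ≤ a} ≤ (Order.height a : WithBot ℕ∞) := by
      refine iSup_le fun p => ?_
      have := Order.length_le_height (x := a)
        (p := p.map Subtype.val (fun _ _ h => h)) (p.last).2
      exact_mod_cast WithBot.coe_le_coe.mpr (by exact this)
    have h2 : Order.krullDim {x : α // a ≤ x} ≤ (Order.coheight a : WithBot ℕ∞) := by
      refine iSup_le fun p => ?_
      have := Order.length_le_coheight (x := a)
        (p := p.map Subtype.val (fun _ _ h => h)) (p.head).2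
      exact_mod_cast WithBot.coe_le_coe.mpr (by exact this)
    have h3 : (Order.height a : WithBot ℕ∞) + (Order.coheight a : WithBot ℕ∞)
        ≤ Order.krullDim α := by
      have : Nonempty α := ⟨a⟩
      rw [Order.krullDim_eq_iSup_height_add_coheight_of_nonempty]
      rw [← WithBot.coe_add]
      exact WithBot.coe_le_coe.mpr (le_iSup (fun a => Order.height a + Order.coheight a) a)
    exact le_trans (add_le_add h1 h2) h3

end Modular

section ModuleLemmas

lemma my_krullDim_congr {A M M' : Type*} [CommRing A] [AddCommGroup M] [Module A M]
    [AddCommGroup M'] [Module A M'] (e : M ≃ₗ[A] M') :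
    Order.krullDim (Submodule A M) = Order.krullDim (Submodule A M') :=
  Order.krullDim_eq_of_orderIso (Submodule.orderIsoMapComap e)

lemma my_krullDim_submodule {A M : Type*} [CommRing A] [AddCommGroup M] [Module A M]
    (N : Submodule A M) :
    Order.krullDim (Submodule A M) =
      Order.krullDim (Submodule A N) + Order.krullDim (Submodule A (M ⧸ N)) := by
  rw [my_krullDim_Iic_Ici (a := N)]
  congr 1
  · exact (Order.krullDim_eq_of_orderIso (Submodule.MapSubtype.orderIso N)).symm
  · exact (Order.krullDim_eq_of_orderIso (Submodule.comapMkQRelIso N)).symm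

lemma my_krullDim_restrict {A B M : Type*} [CommRing A] [CommRing B] [AddCommGroup M]
    [Module A M] [Module B M] (f : A →+* B) (hf : Function.Surjective f)
    (hsmul : ∀ (a : A) (x : M), a • x = f a • x) :
    Order.krullDim (Submodule A M) = Order.krullDim (Submodule B M) := by
  refine Order.krullDim_eq_of_orderIso
    { toFun := fun p =>
        { carrier := p
          add_mem' := fun h1 h2 => p.add_mem h1 h2
          zero_mem' := p.zero_mem
          smul_mem' := fun b x hx => by
            obtain ⟨a, rfl⟩ := hf b
            rw [← hsmul]; exact p.smul_mem a hx }
      invFun := fun q =>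
        { carrier := q
          add_mem' := fun h1 h2 => q.add_mem h1 h2
          zero_mem' := q.zero_mem
          smul_mem' := fun a x hx => by rw [hsmul]; exact q.smul_mem (f a) hx }
      left_inv := fun p => by ext x; rfl
      right_inv := fun q => by ext x; rfl
      map_rel_iff' := Iff.rfl }

end ModuleLemmas

set_option maxHeartbeats 1000000 in
/-- for artinian local rings,
`length(R ×_T S) + length T = length R + length S`. -/
theorem stmt2 (R S T : Type) [CommRing R] [CommRing S] [CommRing T]
    [IsLocalRing R] [IsLocalRing S] [IsLocalRing T]
    [IsArtinianRing R] [IsArtinianRing S] [IsArtinianRing T]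
    (eR : R →+* T) (eS : S →+* T)
    (hR : Function.Surjective eR) (hS : Function.Surjective eS) :
    lenE (fiberProd eR eS) (fiberProd eR eS) + lenE T T = lenE R R + lenE S S := by
  set P := fiberProd eR eS with hPdef
  let ι : P →+* (R × S) := P.subtype
  letI : Module P (R × S) := Module.compHom _ ι
  let πR : P →+* R := (RingHom.fst R S).comp ι
  let πS : P →+* S := (RingHom.snd R S).comp ι
  let τ : P →+* T := eR.comp πR
  letI : Module P R := Module.compHom R πR
  letI : Module P S := Module.compHom S πS
  letI : Module P T := Module.compHom T τ
  have hmem : ∀ x : R × S, x ∈ P ↔ eR x.1 = eS x.2 := fun x => Iff.rfl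
  have hπR : Function.Surjective πR := by
    intro r
    obtain ⟨s, hs⟩ := hS (eR r)
    exact ⟨⟨(r, s), hs.symm⟩, rfl⟩
  have hπS : Function.Surjective πS := by
    intro s
    obtain ⟨r, hr⟩ := hR (eS s)
    exact ⟨⟨(r, s), hr⟩, rfl⟩
  have hτ : Function.Surjective τ := hR.comp hπR
  -- the inclusion as a P-linear map
  let incl : P →ₗ[P] (R × S) :=
    { toFun := fun p => (p : R × S)
      map_add' := fun _ _ => rfl
      map_smul' := fun _ _ => rfl }
  have hincl : Function.Injective incl := Subtype.val_injective
  let N₀ : Submodule P (R × S) := LinearMap.range incl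
  let e₀ : P ≃ₗ[P] N₀ := LinearEquiv.ofInjective incl hincl
  -- the difference map to T
  let φ : (R × S) →ₗ[P] T :=
    { toFun := fun x => eR x.1 - eS x.2
      map_add' := fun x y => by simp only [Prod.fst_add, Prod.snd_add, map_add]; ring
      map_smul' := fun p x => by
        have hp : eR (p : R × S).1 = eS (p : R × S).2 := p.2
        show eR ((p : R × S).1 * x.1) - eS ((p : R × S).2 * x.2)
          = τ p * (eR x.1 - eS x.2)
        rw [map_mul, map_mul, mul_sub]
        show eR (p : R × S).1 * eR x.1 - eS (p : R × S).2 * eS x.2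
          = eR (p : R × S).1 * eR x.1 - eR (p : R × S).1 * eS x.2
        rw [hp] }
  have hφ : Function.Surjective φ := by
    intro t
    obtain ⟨r, hr⟩ := hR t
    exact ⟨(r, 0), by show eR r - eS 0 = t; simp [hr]⟩
  have hker : LinearMap.ker φ = N₀ := by
    ext x
    constructor
    · intro hx
      have : eR x.1 = eS x.2 := by
        have := (LinearMap.mem_ker).mp hx
        have h2 : eR x.1 - eS x.2 = 0 := this
        linear_combination h2
      exact ⟨⟨x, this⟩, rfl⟩
    · rintro ⟨p, rfl⟩
      have hp : eR (p : R × S).1 = eS (p : R × S).2 := p.2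
      show eR (p : R × S).1 - eS (p : R × S).2 = 0
      rw [hp, sub_self]
  let eT : ((R × S) ⧸ N₀) ≃ₗ[P] T :=
    (Submodule.quotEquivOfEq N₀ (LinearMap.ker φ) hker.symm).trans
      (φ.quotKerEquivOfSurjective hφ)
  -- the split for R × S
  let inl : R →ₗ[P] (R × S) :=
    { toFun := fun r => (r, 0)
      map_add' := fun _ _ => by simp [Prod.ext_iff]
      map_smul' := fun p r => by
        show ((p : R × S).1 * r, (0 : S)) = ((p : R × S).1 * r, (p : R × S).2 * 0)
        simp }
  have hinl : Function.Injective inl := fun a b h => congrArg Prod.fst h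
  let N₁ : Submodule P (R × S) := LinearMap.range inl
  let e₁ : R ≃ₗ[P] N₁ := LinearEquiv.ofInjective inl hinl
  let snd : (R × S) →ₗ[P] S :=
    { toFun := fun x => x.2
      map_add' := fun _ _ => rfl
      map_smul' := fun _ _ => rfl }
  have hsnd : Function.Surjective snd := fun s => ⟨(0, s), rfl⟩
  have hker1 : LinearMap.ker snd = N₁ := by
    ext x
    constructor
    · intro hx
      have h2 : x.2 = 0 := hx
      exact ⟨x.1, Prod.ext rfl h2.symm⟩
    · rintro ⟨r, rfl⟩
      rfl
  let eS' : ((R × S) ⧸ N₁) ≃ₗ[P] S :=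
    (Submodule.quotEquivOfEq N₁ (LinearMap.ker snd) hker1.symm).trans
      (snd.quotKerEquivOfSurjective hsnd)
  -- compute lengths
  have key1 : Order.krullDim (Submodule P (R × S))
      = Order.krullDim (Submodule P P) + Order.krullDim (Submodule P T) := by
    rw [my_krullDim_submodule N₀, ← my_krullDim_congr e₀, my_krullDim_congr eT]
  have key2 : Order.krullDim (Submodule P (R × S))
      = Order.krullDim (Submodule P R) + Order.krullDim (Submodule P S) := by
    rw [my_krullDim_submodule N₁, ← my_krullDim_congr e₁, my_krullDim_congr eS']
  have resR : Order.krullDim (Submodule P R) = Order.krullDim (Submodule R R) :=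
    my_krullDim_restrict πR hπR (fun _ _ => rfl)
  have resS : Order.krullDim (Submodule P S) = Order.krullDim (Submodule S S) :=
    my_krullDim_restrict πS hπS (fun _ _ => rfl)
  have resT : Order.krullDim (Submodule P T) = Order.krullDim (Submodule T T) :=
    my_krullDim_restrict τ hτ (fun _ _ => rfl)
  have main : Order.krullDim (Submodule P P) + Order.krullDim (Submodule T T)
      = Order.krullDim (Submodule R R) + Order.krullDim (Submodule S S) := by
    rw [← resT, ← resR, ← resS, ← key1, key2]
  -- translate to lenE
  have hne : ∀ (A : Type) [CommRing A], Order.krullDim (Submodule A A) ≠ ⊥ := by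
    intro A _ hb
    have : Nonempty (Submodule A A) := ⟨⊥⟩
    have h0 := Order.krullDim_nonneg (α := Submodule A A)
    rw [hb] at h0
    exact absurd (le_bot_iff.mp h0) (by simp)
  obtain ⟨a, ha⟩ := WithBot.ne_bot_iff_exists.mp (hne P)
  obtain ⟨b, hb⟩ := WithBot.ne_bot_iff_exists.mp (hne T)
  obtain ⟨c, hc⟩ := WithBot.ne_bot_iff_exists.mp (hne R)
  obtain ⟨d, hd⟩ := WithBot.ne_bot_iff_exists.mp (hne S)
  have habcd : a + b = c + d := by
    have : ((a + b : ℕ∞) : WithBot ℕ∞) = ((c + d : ℕ∞) : WithBot ℕ∞) := by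
      push_cast
      rw [ha, hb, hc, hd]; exact main
    exact_mod_cast this
  show WithBot.unbotD 0 (Order.krullDim (Submodule P P)) + WithBot.unbotD 0 (Order.krullDim (Submodule T T))
    = WithBot.unbotD 0 (Order.krullDim (Submodule R R)) + WithBot.unbotD 0 (Order.krullDim (Submodule S S))
  rw [← ha, ← hb, ← hc, ← hd, WithBot.unbotD_coe, WithBot.unbotD_coe, WithBot.unbotD_coe,
    WithBot.unbotD_coe]
  exact habcd
end
end

section
/- Given a connected sum diagram of artinian local rings with injective maps ι_R : V → R and ι_S : V → S (where V is a T-module, ε_R ι_R = ε_S ι_S), the lengths satisfy length(R #_T S) + length(T) + length(V) = length(R) + length(S). -/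
open RingTheory.Sequence Function

noncomputable section

private lemma lenE_eq (R M : Type*) [CommRing R] [AddCommGroup M] [Module R M] :
    lenE R M = ⨆ (p : LTSeries (Submodule R M)), (p.length : ℕ∞) := by
  rw [lenE, Order.krullDim_eq_iSup_length, WithBot.unbotD_coe]

/-- Transport of length along an additive equivalence compatible with a surjective ring hom. -/
private lemma lenE_transport {A B M V : Type*} [CommRing A] [CommRing B]
    [AddCommGroup M] [Module A M] [AddCommGroup V] [Module B V]
    (f : A →+* B) (hf : Function.Surjective f) (e : M ≃+ V)
    (he : ∀ (a : A) (m : M), e (a • m) = f a • e m) :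
    lenE A M = lenE B V := by
  have hrs : RingHomSurjective f := ⟨hf⟩
  let eh : M →ₛₗ[f] V := { toFun := e, map_add' := map_add e, map_smul' := he }
  have hinj : Function.Injective eh := e.injective
  have hsurj : Function.Surjective eh := e.surjective
  unfold lenE
  congr 1
  exact le_antisymm
    (Order.krullDim_le_of_strictMono _ (Submodule.map_strictMono_of_injective hinj))
    (Order.krullDim_le_of_strictMono _ (Submodule.comap_strictMono_of_surjective hsurj))

private lemma exists_split {A M : Type*} [CommRing A] [AddCommGroup M] [Module A M]
    (N : Submodule A M) :
    ∀ (n : ℕ) (s : LTSeries (Submodule A M)), s.length = n →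
      ∃ (p : LTSeries (Submodule A N)) (q : LTSeries (Submodule A (M ⧸ N))),
        p.length + q.length = n ∧ p.last ≤ Submodule.comap N.subtype s.last ∧
        q.last ≤ Submodule.map N.mkQ s.last := by
  intro n
  induction n with
  | zero =>
    intro s _
    exact ⟨RelSeries.singleton _ ⊥, RelSeries.singleton _ ⊥, by simp, bot_le, bot_le⟩
  | succ n ih =>
    intro s hs
    have hne : s.length ≠ 0 := by omega
    obtain ⟨p, q, hl, hp, hq⟩ := ih s.eraseLast (by
      show s.length - 1 = n; omega)
    have hstep : s.eraseLast.last < s.last := s.eraseLast_last_rel_last hne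
    by_cases hc : Submodule.comap N.subtype s.eraseLast.last < Submodule.comap N.subtype s.last
    · refine ⟨p.snoc _ (lt_of_le_of_lt hp hc), q, ?_, ?_, hq.trans (Submodule.map_mono hstep.le)⟩
      · show p.length + 0 + 1 + q.length = n + 1; omega
      · rw [RelSeries.last_snoc]
    · have hce : Submodule.comap N.subtype s.eraseLast.last = Submodule.comap N.subtype s.last :=
        (Submodule.comap_mono hstep.le).lt_or_eq.resolve_left hc
      have hm : Submodule.map N.mkQ s.eraseLast.last < Submodule.map N.mkQ s.last := by
        rcases (Submodule.map_mono (f := N.mkQ) hstep.le).lt_or_eq with h | hme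
        · exact h
        · exfalso
          have h1 : N ⊓ s.eraseLast.last = N ⊓ s.last := by
            have := congrArg (Submodule.map N.subtype) hce
            rwa [Submodule.map_comap_subtype, Submodule.map_comap_subtype] at this
          have h2 : N ⊔ s.eraseLast.last = N ⊔ s.last := by
            have := congrArg (Submodule.comap N.mkQ) hme
            rwa [Submodule.comap_map_mkQ, Submodule.comap_map_mkQ] at this
          have hb : s.last ≤ s.eraseLast.last ⊔ N := by
            rw [sup_comm, h2]; exact le_sup_right
          have : s.last = s.eraseLast.last := by
            calc s.last = (s.eraseLast.last ⊔ N) ⊓ s.last := (inf_eq_right.mpr hb).symm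
              _ = s.eraseLast.last ⊔ (N ⊓ s.last) := sup_inf_assoc_of_le _ hstep.le
              _ = s.eraseLast.last := by rw [← h1]; exact sup_eq_left.mpr inf_le_right
          exact hstep.ne' this
      refine ⟨p, q.snoc _ (lt_of_le_of_lt hq hm), ?_,
        hp.trans (Submodule.comap_mono hstep.le), ?_⟩
      · show p.length + (q.length + 0 + 1) = n + 1; omega
      · rw [RelSeries.last_snoc]

private lemma lenE_additive (A M : Type*) [CommRing A] [AddCommGroup M] [Module A M]
    (N : Submodule A M) : lenE A M = lenE A N + lenE A (M ⧸ N) := by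
  have hNE1 : Nonempty (LTSeries (Submodule A N)) := ⟨RelSeries.singleton _ ⊥⟩
  have hNE2 : Nonempty (LTSeries (Submodule A (M ⧸ N))) := ⟨RelSeries.singleton _ ⊥⟩
  rw [lenE_eq, lenE_eq, lenE_eq]
  apply le_antisymm
  · apply iSup_le
    intro s
    obtain ⟨p, q, hlen, -, -⟩ := exists_split N s.length s rfl
    calc (s.length : ℕ∞) = (p.length : ℕ∞) + (q.length : ℕ∞) := by
          rw [← Nat.cast_add, hlen]
      _ ≤ _ := add_le_add (le_iSup (fun p : LTSeries (Submodule A N) => (p.length : ℕ∞)) p)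
          (le_iSup (fun q : LTSeries (Submodule A (M ⧸ N)) => (q.length : ℕ∞)) q)
  · rw [ENat.iSup_add]
    apply iSup_le
    intro p
    rw [ENat.add_iSup]
    apply iSup_le
    intro q
    have hf : StrictMono (Submodule.map N.subtype : Submodule A N → Submodule A M) :=
      Submodule.map_strictMono_of_injective N.injective_subtype
    have hg : StrictMono (Submodule.comap N.mkQ : Submodule A (M ⧸ N) → Submodule A M) :=
      Submodule.comap_strictMono_of_surjective N.mkQ_surjective
    by_cases hq0 : q.length = 0
    · refine le_trans ?_ (le_iSup (fun r : LTSeries (Submodule A M) => (r.length : ℕ∞))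
        (p.map _ hf))
      rw [hq0]
      simp [LTSeries.map, RelSeries.map]
    · set pm := p.map _ hf with hpm
      have hqm0 : (q.map _ hg).length ≠ 0 := hq0
      set qm := (q.map _ hg).tail hqm0 with hqm
      have hconn : pm.last < qm.head := by
        have h1 : pm.last ≤ N := by
          rw [hpm, LTSeries.last_map]
          exact Submodule.map_subtype_le N p.last
      
        have h2 : N ≤ Submodule.comap N.mkQ q.head := by
          intro x hx
          have hz : N.mkQ x = 0 := by
            rw [Submodule.mkQ_apply]
            exact (Submodule.Quotient.mk_eq_zero N).mpr hx
          show N.mkQ x ∈ q.head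
          rw [hz]; exact (q.head).zero_mem
        have h01 : (0 : Fin (q.length + 1)) < 1 := by
          rw [Fin.lt_def]
          have hv : ((1 : Fin (q.length + 1)) : ℕ) = 1 % (q.length + 1) := rfl
          rw [hv]
          have : 1 % (q.length + 1) = 1 := Nat.mod_eq_of_lt (by omega)
          simp [this]
        have h3 : Submodule.comap N.mkQ q.head < qm.head := by
          rw [hqm, RelSeries.head_tail]
          show Submodule.comap N.mkQ q.head < Submodule.comap N.mkQ (q 1)
          exact hg (q.strictMono h01)
        exact lt_of_le_of_lt (h1.trans h2) h3
      refine le_trans ?_ (le_iSup (fun r : LTSeries (Submodule A M) => (r.length : ℕ∞))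
        (pm.append qm hconn))
      have hlen : (pm.append qm hconn).length = p.length + q.length := by
        show pm.length + qm.length + 1 = _
        have h1 : pm.length = p.length := rfl
        have h2 : qm.length = q.length - 1 := rfl
        omega
      rw [hlen, Nat.cast_add]


set_option maxHeartbeats 1000000 in
set_option synthInstance.maxHeartbeats 1000000 in
private lemma lenE_quot_self {A : Type*} [CommRing A] (I : Ideal A) :
    lenE (A ⧸ I) (A ⧸ I) = lenE A (A ⧸ I) := by
  refine (lenE_transport (Ideal.Quotient.mk I) Ideal.Quotient.mk_surjective
    (AddEquiv.refl _) ?_).symm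
  intro a m
  obtain ⟨b, rfl⟩ := Ideal.Quotient.mk_surjective m
  show a • (Ideal.Quotient.mk I b) = Ideal.Quotient.mk I a * Ideal.Quotient.mk I b
  rw [← map_mul, show a * b = a • b from rfl]
  exact (Submodule.Quotient.mk_smul I a b).symm

set_option maxHeartbeats 1000000 in
set_option synthInstance.maxHeartbeats 1000000 in
private lemma lenE_quot_ker {A B : Type*} [CommRing A] [CommRing B] (f : A →+* B)
    (hf : Function.Surjective f) : lenE A (A ⧸ RingHom.ker f) = lenE B B := by
  have hbij : Function.Bijective (RingHom.kerLift f) := by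
    constructor
    · exact RingHom.kerLift_injective f
    · intro r
      obtain ⟨x, rfl⟩ := hf r
      exact ⟨Ideal.Quotient.mk _ x, RingHom.kerLift_mk f x⟩
  refine lenE_transport f hf
    (AddEquiv.ofBijective (RingHom.kerLift f).toAddMonoidHom hbij) ?_
  intro a m
  obtain ⟨b, rfl⟩ := Ideal.Quotient.mk_surjective m
  have hsm : a • (Ideal.Quotient.mk (RingHom.ker f) b)
      = Ideal.Quotient.mk (RingHom.ker f) (a * b) := by
    rw [show a * b = a • b from rfl]
    exact (Submodule.Quotient.mk_smul (RingHom.ker f) a b).symm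
  rw [hsm]
  simp only [AddEquiv.ofBijective_apply, RingHom.toAddMonoidHom_eq_coe,
    AddMonoidHom.coe_coe]
  rw [RingHom.kerLift_mk, RingHom.kerLift_mk, smul_eq_mul, map_mul]

set_option maxHeartbeats 1000000 in
set_option synthInstance.maxHeartbeats 1000000 in
private lemma lenE_self_split {A B : Type*} [CommRing A] [CommRing B] (f : A →+* B)
    (hf : Function.Surjective f) :
    lenE A A = lenE A ↥(RingHom.ker f) + lenE B B := by
  rw [lenE_additive A A (RingHom.ker f), lenE_quot_ker f hf]

set_option synthInstance.maxHeartbeats 1000000 in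
set_option maxHeartbeats 1000000 in
/-- length formula for the connected sum:
`length(R #_T S) + length T + length V = length R + length S`. -/
theorem stmt12 (R S T V : Type) [CommRing R] [CommRing S] [CommRing T]
    [IsLocalRing R] [IsLocalRing S] [IsLocalRing T]
    [IsArtinianRing R] [IsArtinianRing S] [IsArtinianRing T]
    [AddCommGroup V] [Module T V] [Module.Finite T V]
    (eR : R →+* T) (eS : S →+* T)
    (hR : Function.Surjective eR) (hS : Function.Surjective eS)
    (iR : V →+ R) (iS : V →+ S)
    (hiR : ∀ (r : R) (v : V), iR (eR r • v) = r * iR v)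
    (hiS : ∀ (s : S) (v : V), iS (eS s • v) = s * iS v)
    (hinjR : Function.Injective iR) (hinjS : Function.Injective iS)
    (hcomp : ∀ v : V, eR (iR v) = eS (iS v)) :
    lenE (↥(fiberProd eR eS) ⧸
        Ideal.span {p : ↥(fiberProd eR eS) | ∃ v : V, (p : R × S) = (iR v, iS v)})
      (↥(fiberProd eR eS) ⧸
        Ideal.span {p : ↥(fiberProd eR eS) | ∃ v : V, (p : R × S) = (iR v, iS v)})
      + lenE T T + lenE T V = lenE R R + lenE S S := by
  classical
  -- the connecting ideal J
  let J : Ideal ↥(fiberProd eR eS) :=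
    { carrier := {p : ↥(fiberProd eR eS) | ∃ v : V, (p : R × S) = (iR v, iS v)}
      add_mem' := by
        rintro a b ⟨v, hv⟩ ⟨w, hw⟩
        refine ⟨v + w, ?_⟩
        have : ((a + b : ↥(fiberProd eR eS)) : R × S) = (a : R × S) + (b : R × S) := rfl
        rw [this, hv, hw]
        simp [Prod.ext_iff]
      zero_mem' := ⟨0, by simp [Prod.ext_iff]⟩
      smul_mem' := by
        rintro c x ⟨v, hv⟩
        refine ⟨eR (c : R × S).1 • v, ?_⟩
        have hc : eR (c : R × S).1 = eS (c : R × S).2 := c.2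
        have hmul : ((c • x : ↥(fiberProd eR eS)) : R × S) = (c : R × S) * (x : R × S) := rfl
        rw [hmul, hv]
        refine Prod.ext ?_ ?_
        · show (c : R × S).1 * iR v = iR (eR (c : R × S).1 • v)
          rw [hiR]
        · show (c : R × S).2 * iS v = iS (eR (c : R × S).1 • v)
          rw [hc, hiS] }
  have hJ : Ideal.span {p : ↥(fiberProd eR eS) | ∃ v : V, (p : R × S) = (iR v, iS v)} = J := by
    have h : {p : ↥(fiberProd eR eS) | ∃ v : V, (p : R × S) = (iR v, iS v)}
        = (J : Set ↥(fiberProd eR eS)) := rfl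
    rw [h, Ideal.span_eq]
  rw [hJ]
  -- projections
  let π₁ : ↥(fiberProd eR eS) →+* R := (RingHom.fst R S).comp (fiberProd eR eS).subtype
  let π₂ : ↥(fiberProd eR eS) →+* S := (RingHom.snd R S).comp (fiberProd eR eS).subtype
  have hπ₁ : Function.Surjective π₁ := by
    intro r
    obtain ⟨s, hs⟩ := hS (eR r)
    exact ⟨⟨(r, s), show eR r = eS s from hs.symm⟩, rfl⟩
  have hπ₂ : Function.Surjective π₂ := by
    intro s
    obtain ⟨r, hr⟩ := hR (eS s)
    exact ⟨⟨(r, s), show eR r = eS s from hr⟩, rfl⟩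
  let φ : ↥(fiberProd eR eS) →+* T := eR.comp π₁
  have hφ : Function.Surjective φ := hR.comp hπ₁
  -- step 1 : quotient ring length over itself = over P
  have h1 : lenE (↥(fiberProd eR eS) ⧸ J) (↥(fiberProd eR eS) ⧸ J)
      = lenE ↥(fiberProd eR eS) (↥(fiberProd eR eS) ⧸ J) := lenE_quot_self J
  -- step 2 : V ≃ J
  let eJf : V →+ ↥J :=
    { toFun := fun v => ⟨⟨(iR v, iS v), show eR (iR v) = eS (iS v) from hcomp v⟩, ⟨v, rfl⟩⟩
      map_zero' := by ext <;> simp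
      map_add' := fun v w => by ext <;> simp }
  have heJf : ∀ v : V, ((eJf v : ↥(fiberProd eR eS)) : R × S) = (iR v, iS v) := fun _ => rfl
  let eJ : V ≃+ ↥J := AddEquiv.ofBijective eJf ⟨by
      intro v w h
      apply hinjR
      have := congrArg (fun x : ↥J => ((x : ↥(fiberProd eR eS)) : R × S).1) h
      simpa [heJf] using this, by
      rintro ⟨⟨⟨x1, x2⟩, hx⟩, v, hv⟩
      refine ⟨v, ?_⟩
      apply Subtype.ext
      apply Subtype.ext
      simp only [Prod.mk.injEq] at hv
      exact Prod.ext hv.1.symm hv.2.symm⟩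
  have hsmul : ∀ (a : ↥(fiberProd eR eS)) (v : V), a • eJ v = eJ (φ a • v) := by
    intro a v
    apply Subtype.ext
    apply Subtype.ext
    have hL : (((a • eJ v : ↥J) : ↥(fiberProd eR eS)) : R × S)
        = (a : R × S) * ((eJ v : ↥(fiberProd eR eS)) : R × S) := rfl
    have hR' : (((eJ (φ a • v) : ↥J) : ↥(fiberProd eR eS)) : R × S)
        = (iR (φ a • v), iS (φ a • v)) := rfl
    rw [hL, hR']
    have heq : ((eJ v : ↥(fiberProd eR eS)) : R × S) = (iR v, iS v) := rfl
    rw [heq]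
    have ha : eR (a : R × S).1 = eS (a : R × S).2 := a.2
    have hφa : φ a = eR (a : R × S).1 := rfl
    refine Prod.ext ?_ ?_
    · show (a : R × S).1 * iR v = iR (φ a • v)
      rw [hφa, hiR]
    · show (a : R × S).2 * iS v = iS (φ a • v)
      rw [hφa, ha, hiS]
  have hV' : lenE T V = lenE ↥(fiberProd eR eS) ↥J := by
    refine (lenE_transport φ hφ eJ.symm ?_).symm
    intro a m
    have := hsmul a (eJ.symm m)
    rw [AddEquiv.apply_symm_apply] at this
    rw [this, AddEquiv.symm_apply_apply]
  rw [hV']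
  -- step 3 : quotient by ker π₁ is R
  -- step 4 : quotient of S by ker eS is T
  -- step 5 : ker π₁ ≃ ker eS
  let eKf : ↥(RingHom.ker π₁) →+ ↥(RingHom.ker eS) :=
    { toFun := fun x => ⟨((x : ↥(fiberProd eR eS)) : R × S).2, by
        have h0 : π₁ (x : ↥(fiberProd eR eS)) = 0 := x.2
        have hmem : eR ((x : ↥(fiberProd eR eS)) : R × S).1
            = eS ((x : ↥(fiberProd eR eS)) : R × S).2 := (x : ↥(fiberProd eR eS)).2
        have h1' : ((x : ↥(fiberProd eR eS)) : R × S).1 = 0 := h0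
        rw [RingHom.mem_ker, ← hmem, h1', map_zero]⟩
      map_zero' := rfl
      map_add' := fun x y => rfl }
  have hker : lenE ↥(fiberProd eR eS) ↥(RingHom.ker π₁) = lenE S ↥(RingHom.ker eS) := by
    refine lenE_transport π₂ hπ₂ (AddEquiv.ofBijective eKf ⟨?_, ?_⟩) ?_
    · intro x y h
      have h2 : ((x : ↥(fiberProd eR eS)) : R × S).2 = ((y : ↥(fiberProd eR eS)) : R × S).2 :=
        congrArg Subtype.val h
      have h1x : ((x : ↥(fiberProd eR eS)) : R × S).1 = 0 := x.2
      have h1y : ((y : ↥(fiberProd eR eS)) : R × S).1 = 0 := y.2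
      apply Subtype.ext
      apply Subtype.ext
      refine Prod.ext ?_ h2
      rw [h1x, h1y]
    · rintro ⟨s, hs⟩
      rw [RingHom.mem_ker] at hs
      refine ⟨⟨⟨(0, s), show eR 0 = eS s by rw [map_zero, hs]⟩,
        show ((0 : R), s).1 = 0 from rfl⟩, rfl⟩
    · intro a m
      apply Subtype.ext
      rfl
  -- additivity
  have hA0 : lenE ↥(fiberProd eR eS) ↥(fiberProd eR eS)
      = lenE ↥(fiberProd eR eS) ↥J + lenE ↥(fiberProd eR eS) (↥(fiberProd eR eS) ⧸ J) :=
    lenE_additive _ _ J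
  have hA1 : lenE ↥(fiberProd eR eS) ↥(fiberProd eR eS)
      = lenE ↥(fiberProd eR eS) ↥(RingHom.ker π₁) + lenE R R := lenE_self_split π₁ hπ₁
  have hA2 : lenE S S = lenE S ↥(RingHom.ker eS) + lenE T T := lenE_self_split eS hS
  rw [h1]
  calc lenE ↥(fiberProd eR eS) (↥(fiberProd eR eS) ⧸ J) + lenE T T
        + lenE ↥(fiberProd eR eS) ↥J
      = (lenE ↥(fiberProd eR eS) ↥J + lenE ↥(fiberProd eR eS) (↥(fiberProd eR eS) ⧸ J))
        + lenE T T := by abel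
    _ = lenE ↥(fiberProd eR eS) ↥(fiberProd eR eS) + lenE T T := by rw [← hA0]
    _ = (lenE ↥(fiberProd eR eS) ↥(RingHom.ker π₁) + lenE R R) + lenE T T := by rw [hA1]
    _ = (lenE S ↥(RingHom.ker eS) + lenE T T) + lenE R R := by rw [hker]; abel
    _ = lenE S S + lenE R R := by rw [← hA2]
    _ = lenE R R + lenE S S := add_comm _ _

end
end
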